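/- Parabolic coordinates: suppose real numbers q₁,…,q_{n+1} and μ₁,…,μ_{n+1} satisfy the polynomial identity (4z − 4q_{n+1} + 4B)·Π_{i=1}^n (z + A_i) − Σ_{i=1}^n q_i²·Π_{k≠i}(z + A_k) = 4·Π_{j=1}^{n+1}(z − μ_j) for all z ∈ ℝ (equivalently, the μ_j are the zeros of the rational function U(z) = 4z − 4q_{n+1} + 4B − Σ_{i=1}^n q_i²/(z+A_i)). Then q_{n+1} = Σ_{i=1}^n A_i + B + Σ_{j=1}^{n+1} μ_j and, for each m = 1,…,n, q_m² = −4·Π_{j=1}^{n+1}(μ_j + A_m) / Π_{k≠m}(A_m − A_k) (for n = 1 the empty product in the denominator is 1, so q₁² = −4(μ₁ + A₁)(μ₂ + A₁)). -/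
import Mathlib


open scoped BigOperators
open Finset Polynomial

lemma prod_neg_aux {ι : Type*} (s : Finset ι) (g : ι → ℝ) :
    ∏ k ∈ s, (-(g k)) = (-1) ^ s.card * ∏ k ∈ s, g k := by
  rw [← Finset.prod_const, ← Finset.prod_mul_distrib]
  exact Finset.prod_congr rfl fun k _ => by ring

/-- parabolic coordinates expressed through the zeros μ_j of U(z). -/
theorem parabolic_coordinates
    (n : ℕ) (hn : 1 ≤ n) (A : Fin n → ℝ) (hA : Function.Injective A) (B : ℝ)
    (q : Fin (n+1) → ℝ) (μ : Fin (n+1) → ℝ)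
    (hU : ∀ z : ℝ,
      (4 * z - 4 * q (Fin.last n) + 4 * B) * ∏ i : Fin n, (z + A i)
        - ∑ i : Fin n, (q i.castSucc) ^ 2 * ∏ k ∈ Finset.univ \ {i}, (z + A k)
      = 4 * ∏ j : Fin (n+1), (z - μ j)) :
    q (Fin.last n) = ∑ i : Fin n, A i + B + ∑ j : Fin (n+1), μ j ∧
    ∀ m : Fin n,
      (q m.castSucc) ^ 2
        = -4 * (∏ j : Fin (n+1), (μ j + A m))
            / ∏ k ∈ Finset.univ \ {m}, (A m - A k) := by
  constructor
  · -- first part: compare coefficients of z^n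
    set d : ℝ := -4 * q (Fin.last n) + 4 * B with hd
    set P : ℝ[X] := ∏ i : Fin n, (X + C (A i)) with hP
    set S : ℝ[X] := ∑ i : Fin n, C ((q i.castSucc) ^ 2) *
        ∏ k ∈ Finset.univ \ {i}, (X + C (A k)) with hS
    set R : ℝ[X] := C 4 * ∏ j : Fin (n+1), (X - C (μ j)) with hR
    have hpoly : (C 4 * X + C d) * P - S = R := by
      apply Polynomial.funext
      intro z
      have h := hU z
      simp only [hP, hS, hR, eval_sub, eval_mul, eval_add, eval_C, eval_X,
        eval_prod, eval_finset_sum, eval_pow]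
      rw [hd]
      linear_combination h
    have hPmonic : P.Monic := monic_prod_of_monic _ _ fun i _ => monic_X_add_C _
    have hPdeg : P.natDegree = n := by
      rw [hP, Polynomial.natDegree_prod_of_monic _ _ fun i _ => monic_X_add_C _]
      simp
    have hPcoeffn : P.coeff n = 1 := by
      have := hPmonic.coeff_natDegree
      rwa [hPdeg] at this
    have hPcoeffn1 : P.coeff (n - 1) = ∑ i : Fin n, A i := by
      have hP' : P = ∏ i : Fin n, (X - C (-(A i))) := by
        rw [hP]; exact Finset.prod_congr rfl fun i _ => by
          rw [map_neg, sub_neg_eq_add]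
      have hcard : (Finset.univ : Finset (Fin n)).card = n := by simp
      have := Polynomial.prod_X_sub_C_coeff_card_pred (Finset.univ : Finset (Fin n))
        (fun i => -(A i)) (by simp; omega)
      rw [hcard] at this
      rw [hP', this]
      simp
    have hScoeff : S.coeff n = 0 := by
      rw [hS, Polynomial.finset_sum_coeff]
      apply Finset.sum_eq_zero
      intro i _
      rw [Polynomial.coeff_C_mul]
      have hdeg : (∏ k ∈ Finset.univ \ {i}, (X + C (A k)) : ℝ[X]).natDegree = n - 1 := by
        rw [Polynomial.natDegree_prod_of_monic _ _ fun k _ => monic_X_add_C _]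
        simp [Finset.card_sdiff]
      rw [Polynomial.coeff_eq_zero_of_natDegree_lt (by rw [hdeg]; omega)]
      ring
    have hRcoeff : R.coeff n = 4 * (-(∑ j : Fin (n+1), μ j)) := by
      have hcard : (Finset.univ : Finset (Fin (n+1))).card = n + 1 := by simp
      have := Polynomial.prod_X_sub_C_coeff_card_pred (Finset.univ : Finset (Fin (n+1)))
        μ (by simp)
      rw [hcard] at this
      simp only [Nat.add_sub_cancel] at this
      rw [hR, Polynomial.coeff_C_mul, this]
    have hLcoeff : ((C 4 * X + C d) * P).coeff n = 4 * (∑ i : Fin n, A i) + d := by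
      have : (C 4 * X + C d) * P = C 4 * (X * P) + C d * P := by ring
      rw [this, Polynomial.coeff_add, Polynomial.coeff_C_mul, Polynomial.coeff_C_mul]
      obtain ⟨m0, rfl⟩ : ∃ m0, n = m0 + 1 := ⟨n - 1, by omega⟩
      rw [Polynomial.coeff_X_mul]
      simp only [Nat.add_sub_cancel] at hPcoeffn1
      rw [hPcoeffn1, hPcoeffn]
      ring
    have := congrArg (fun p : ℝ[X] => p.coeff n) hpoly
    simp only [Polynomial.coeff_sub, hLcoeff, hScoeff, hRcoeff] at this
    rw [hd] at this
    linarith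
  · intro m
    have h := hU (-(A m))
    have h1 : ∏ i : Fin n, (-(A m) + A i) = 0 :=
      Finset.prod_eq_zero (Finset.mem_univ m) (by ring)
    have h2 : ∑ i : Fin n, (q i.castSucc) ^ 2 * ∏ k ∈ Finset.univ \ {i}, (-(A m) + A k)
        = (q m.castSucc) ^ 2 * ∏ k ∈ Finset.univ \ {m}, (-(A m) + A k) := by
      apply Finset.sum_eq_single
      · intro i _ hi
        have : ∏ k ∈ Finset.univ \ {i}, (-(A m) + A k) = 0 :=
          Finset.prod_eq_zero (i := m) (by simp [Ne.symm hi]) (by ring)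
        rw [this]; ring
      · intro habs; exact absurd (Finset.mem_univ m) habs
    rw [h1, mul_zero, h2] at h
    -- h : 0 - q m ^2 * ∏ k≠m (-A m + A k) = 4 * ∏ j (-A m - μ j)
    have hDcard : (Finset.univ \ {m} : Finset (Fin n)).card = n - 1 := by
      simp [Finset.card_sdiff]
    have hDprod : ∏ k ∈ Finset.univ \ {m}, (-(A m) + A k)
        = (-1) ^ (n - 1) * ∏ k ∈ Finset.univ \ {m}, (A m - A k) := by
      rw [← hDcard, ← prod_neg_aux]
      exact Finset.prod_congr rfl fun k _ => by ring
    have hPprod : ∏ j : Fin (n+1), (-(A m) - μ j)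
        = (-1) ^ (n - 1) * ∏ j : Fin (n+1), (μ j + A m) := by
      have hsign : ((-1 : ℝ)) ^ (n + 1) = (-1) ^ (n - 1) := by
        obtain ⟨m0, rfl⟩ : ∃ m0, n = m0 + 1 := ⟨n - 1, by omega⟩
        simp [pow_succ, pow_add]
      have hc : (Finset.univ : Finset (Fin (n+1))).card = n + 1 := by simp
      calc ∏ j : Fin (n+1), (-(A m) - μ j)
          = ∏ j : Fin (n+1), (-(μ j + A m)) :=
            Finset.prod_congr rfl fun j _ => by ring
        _ = (-1) ^ (n + 1) * ∏ j : Fin (n+1), (μ j + A m) := by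
            rw [prod_neg_aux, hc]
        _ = _ := by rw [hsign]
    rw [hDprod, hPprod] at h
    have hD : ∏ k ∈ Finset.univ \ {m}, (A m - A k) ≠ 0 := by
      rw [Finset.prod_ne_zero_iff]
      intro k hk
      have : k ≠ m := by simpa [Finset.mem_sdiff] using hk
      exact sub_ne_zero_of_ne fun hmk => this (hA hmk.symm)
    rw [eq_div_iff hD]
    rcases neg_one_pow_eq_or ℝ (n - 1) with hs | hs <;> rw [hs] at h <;>
      first | linear_combination -h | linear_combination h
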